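/- Let n, k, d be positive integers, μ₀ ≥ 1, β ∈ (0,1), σ₁* > 0. Let Ω ⊆ [n]×[n] be such that for every j ∈ [n] the set S_j = { i : (i,j) ∈ Ω } has exactly d elements. Let U, U* ∈ ℝ^{n×k} be orthonormal, with every row u_i of U satisfying ‖u_i‖₂ ≤ √(5μ₀k/n); set D = UᵀU* and B^j = (n/d)·Σ_{i∈S_j} u_i u_iᵀ. Let V* ∈ ℝ^{n×k} have rows v_j* with ‖v_j*‖₂ ≤ √(μ₀k/n), and let Σ* ∈ ℝ^{k×k} satisfy ‖Σ*‖₂ ≤ σ₁*. Suppose that for every j ∈ [n], B̂^j ∈ ℝ^{k×k} is a symmetric positive definite matrix all of whose eigenvalues lie in [β, 2−β]. Then for every S ⊆ [n] and all row vectors x^1, …, x^n ∈ ℝ^{1×k} with Σ_{j∈[n]} ‖x^j‖₂² = 1, one has Σ_{j∈S} x^j (B̂^j)^{-1} (B̂^j − B^j) D Σ* v_j* ≤ (2 − β + 5μ₀k)·(σ₁*/β)·√(μ₀k)·√(|S|/n). -/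

import Mathlib

open Matrix
open scoped Classical

/-- Euclidean norm of a vector in `ℝ^k`. -/
noncomputable def vecNorm {k : ℕ} (v : Fin k → ℝ) : ℝ := Real.sqrt (∑ i, v i ^ 2)

/-- Spectral norm (largest singular value) of a real matrix. -/
noncomputable def specNorm {m n : ℕ} (A : Matrix (Fin m) (Fin n) ℝ) : ℝ :=
  sSup {c : ℝ | ∃ x : Fin n → ℝ, vecNorm x = 1 ∧ c = vecNorm (A.mulVec x)}

/-- The left neighborhood `S_j = {i : (i,j) ∈ Ω}`. -/
def Sj {n : ℕ} (Ω : Finset (Fin n × Fin n)) (j : Fin n) : Finset (Fin n) :=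
  Finset.univ.filter fun i => (i, j) ∈ Ω


lemma vecNorm_nonneg {k : ℕ} (v : Fin k → ℝ) : 0 ≤ vecNorm v := Real.sqrt_nonneg _

lemma vecNorm_sq {k : ℕ} (v : Fin k → ℝ) : vecNorm v ^ 2 = ∑ i, v i ^ 2 := by
  rw [vecNorm, Real.sq_sqrt]; positivity

lemma dot_self_eq {k : ℕ} (v : Fin k → ℝ) : v ⬝ᵥ v = vecNorm v ^ 2 := by
  rw [vecNorm_sq, dotProduct]; simp [sq]

lemma dotProduct_le {k : ℕ} (v w : Fin k → ℝ) : v ⬝ᵥ w ≤ vecNorm v * vecNorm w := by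
  rw [vecNorm, vecNorm, ← Real.sqrt_mul (by positivity)]
  calc v ⬝ᵥ w ≤ |v ⬝ᵥ w| := le_abs_self _
  _ ≤ Real.sqrt ((∑ i, v i ^ 2) * ∑ i, w i ^ 2) := by
      rw [← Real.sqrt_sq_eq_abs]
      exact Real.sqrt_le_sqrt (by simpa [dotProduct] using Finset.sum_mul_sq_le_sq_mul_sq Finset.univ v w)

lemma dot_mulVec_eq {k m : ℕ} (M : Matrix (Fin m) (Fin k) ℝ) (v w : Fin k → ℝ) :
    M.mulVec v ⬝ᵥ M.mulVec w = v ⬝ᵥ (Mᵀ * M).mulVec w := by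
  rw [← Matrix.mulVec_mulVec, Matrix.dotProduct_mulVec v, Matrix.vecMul_transpose]

lemma vecNorm_mulVec_isometry {k m : ℕ} {M : Matrix (Fin m) (Fin k) ℝ}
    (h : Mᵀ * M = 1) (v : Fin k → ℝ) : vecNorm (M.mulVec v) = vecNorm v := by
  have h1 : M.mulVec v ⬝ᵥ M.mulVec v = v ⬝ᵥ v := by rw [dot_mulVec_eq, h, Matrix.one_mulVec]
  rw [dot_self_eq, dot_self_eq] at h1
  have := vecNorm_nonneg v; have := vecNorm_nonneg (M.mulVec v)
  nlinarith

lemma vecNorm_mulVec_transpose_le {k m : ℕ} {M : Matrix (Fin m) (Fin k) ℝ}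
    (h : Mᵀ * M = 1) (w : Fin m → ℝ) : vecNorm (Mᵀ.mulVec w) ≤ vecNorm w := by
  have key : vecNorm (Mᵀ.mulVec w) ^ 2 ≤ vecNorm w * vecNorm (Mᵀ.mulVec w) := by
    have h1 : Mᵀ.mulVec w ⬝ᵥ Mᵀ.mulVec w = w ⬝ᵥ (M.mulVec (Mᵀ.mulVec w)) := by
      rw [Matrix.dotProduct_mulVec w, ← Matrix.mulVec_transpose]
    have h2 : vecNorm (M.mulVec (Mᵀ.mulVec w)) = vecNorm (Mᵀ.mulVec w) :=
      vecNorm_mulVec_isometry h _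
    calc vecNorm (Mᵀ.mulVec w) ^ 2 = w ⬝ᵥ (M.mulVec (Mᵀ.mulVec w)) := by
          rw [← dot_self_eq, h1]
      _ ≤ vecNorm w * vecNorm (M.mulVec (Mᵀ.mulVec w)) := dotProduct_le _ _
      _ = vecNorm w * vecNorm (Mᵀ.mulVec w) := by rw [h2]
  rcases eq_or_lt_of_le (vecNorm_nonneg (Mᵀ.mulVec w)) with h0 | h0
  · rw [← h0]; exact vecNorm_nonneg w
  · nlinarith

lemma herm_mulVec_bounds {k : ℕ} {A : Matrix (Fin k) (Fin k) ℝ} (hA : A.IsHermitian)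
    {a b : ℝ} (ha : 0 ≤ a) (hab : ∀ l, a ≤ hA.eigenvalues l ∧ hA.eigenvalues l ≤ b)
    (v : Fin k → ℝ) :
    a * vecNorm v ≤ vecNorm (A.mulVec v) ∧ vecNorm (A.mulVec v) ≤ b * vecNorm v := by
  set W : Matrix (Fin k) (Fin k) ℝ := (Matrix.IsHermitian.eigenvectorUnitary hA : Matrix (Fin k) (Fin k) ℝ) with hWdef
  have hmem := (Matrix.IsHermitian.eigenvectorUnitary hA).2
  rw [Matrix.mem_unitaryGroup_iff'] at hmem
  have hmem2 := (Matrix.IsHermitian.eigenvectorUnitary hA).2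
  rw [Matrix.mem_unitaryGroup_iff] at hmem2
  have hW1 : Wᵀ * W = 1 := by
    rw [← Matrix.conjTranspose_eq_transpose_of_trivial]; exact hmem
  have hW2 : W * Wᵀ = 1 := by
    rw [← Matrix.conjTranspose_eq_transpose_of_trivial]; exact hmem2
  set c : Fin k → ℝ := Wᵀ.mulVec v with hcdef
  have hcv : vecNorm c = vecNorm v := by
    apply vecNorm_mulVec_isometry; rw [Matrix.transpose_transpose]; exact hW2
  have hST : A = W * Matrix.diagonal hA.eigenvalues * Wᵀ := by
    have h := hA.spectral_theorem
    rw [Unitary.conjStarAlgAut_apply, Matrix.star_eq_conjTranspose, Matrix.conjTranspose_eq_transpose_of_trivial] at h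
    have hd : Matrix.diagonal (RCLike.ofReal ∘ hA.eigenvalues) = Matrix.diagonal hA.eigenvalues := by
      ext i j
      by_cases hij : i = j <;> simp [Matrix.diagonal, hij]
    rwa [hd] at h
  have hAv : A.mulVec v = W.mulVec ((Matrix.diagonal hA.eigenvalues).mulVec c) := by
    show A *ᵥ v = W *ᵥ (Matrix.diagonal hA.eigenvalues *ᵥ (Wᵀ *ᵥ v))
    conv_lhs => rw [hST]
    rw [Matrix.mulVec_mulVec, Matrix.mulVec_mulVec]
  have hnAv : vecNorm (A.mulVec v) = vecNorm ((Matrix.diagonal hA.eigenvalues).mulVec c) := by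
    rw [hAv]; exact vecNorm_mulVec_isometry hW1 _
  have hdiag : ∀ i, (Matrix.diagonal hA.eigenvalues).mulVec c i = hA.eigenvalues i * c i := by
    intro i; rw [Matrix.mulVec_diagonal]
  have hsq : vecNorm ((Matrix.diagonal hA.eigenvalues).mulVec c) ^ 2
      = ∑ i, (hA.eigenvalues i) ^ 2 * c i ^ 2 := by
    rw [vecNorm_sq]; apply Finset.sum_congr rfl; intro i _; rw [hdiag]; ring
  have hlow : a ^ 2 * vecNorm c ^ 2 ≤ vecNorm ((Matrix.diagonal hA.eigenvalues).mulVec c) ^ 2 := by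
    rw [hsq, vecNorm_sq, Finset.mul_sum]
    apply Finset.sum_le_sum; intro i _
    have h1 := (hab i).1
    nlinarith [sq_nonneg (c i), mul_self_le_mul_self ha h1]
  have hhigh : vecNorm ((Matrix.diagonal hA.eigenvalues).mulVec c) ^ 2 ≤ b ^ 2 * vecNorm c ^ 2 := by
    rw [hsq, vecNorm_sq, Finset.mul_sum]
    apply Finset.sum_le_sum; intro i _
    have h1 := (hab i).1; have h2 := (hab i).2
    nlinarith [sq_nonneg (c i), mul_self_le_mul_self (ha.trans h1) h2]
  have hb : 0 ≤ b ∨ k = 0 := by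
    rcases Nat.eq_zero_or_pos k with h | h
    · exact Or.inr h
    · exact Or.inl (ha.trans ((hab ⟨0, h⟩).1.trans (hab ⟨0, h⟩).2))
  constructor
  · rw [hnAv]
    have : (a * vecNorm c) ^ 2 ≤ vecNorm ((Matrix.diagonal hA.eigenvalues).mulVec c) ^ 2 := by
      rw [mul_pow]; exact hlow
    rw [← hcv]
    have hnn : 0 ≤ a * vecNorm c := mul_nonneg ha (vecNorm_nonneg _)
    nlinarith [vecNorm_nonneg ((Matrix.diagonal hA.eigenvalues).mulVec c)]
  · rw [hnAv, ← hcv]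
    rcases hb with hb | hb
    · have hnn : 0 ≤ b * vecNorm c := mul_nonneg hb (vecNorm_nonneg _)
      nlinarith [vecNorm_nonneg ((Matrix.diagonal hA.eigenvalues).mulVec c)]
    · subst hb
      have h1 : vecNorm c = 0 := by simp [vecNorm]
      have h2 : vecNorm ((Matrix.diagonal hA.eigenvalues).mulVec c) = 0 := by simp [vecNorm]
      rw [h1, h2, mul_zero]

lemma vecNorm_eq_norm {k : ℕ} (v : Fin k → ℝ) :
    vecNorm v = ‖(WithLp.equiv 2 (Fin k → ℝ)).symm v‖ := by
  rw [EuclideanSpace.norm_eq]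
  simp [vecNorm, sq_abs]

lemma vecNorm_sub_le {k : ℕ} (v w : Fin k → ℝ) : vecNorm (v - w) ≤ vecNorm v + vecNorm w := by
  rw [vecNorm_eq_norm, vecNorm_eq_norm, vecNorm_eq_norm]
  exact norm_sub_le _ _

lemma vecNorm_smul {k : ℕ} (c : ℝ) (v : Fin k → ℝ) : vecNorm (c • v) = |c| * vecNorm v := by
  simp only [vecNorm, Pi.smul_apply, smul_eq_mul, mul_pow, ← Finset.mul_sum]
  rw [Real.sqrt_mul (sq_nonneg c), Real.sqrt_sq_eq_abs]

lemma vecNorm_sum_le {k : ℕ} {ι : Type*} (s : Finset ι) (f : ι → Fin k → ℝ) :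
    vecNorm (∑ i ∈ s, f i) ≤ ∑ i ∈ s, vecNorm (f i) := by
  simp only [vecNorm_eq_norm]
  have : (WithLp.equiv 2 (Fin k → ℝ)).symm (∑ i ∈ s, f i)
      = ∑ i ∈ s, (WithLp.equiv 2 (Fin k → ℝ)).symm (f i) := by
    rw [WithLp.equiv_symm_apply, WithLp.toLp_sum]
  rw [this]
  exact norm_sum_le _ _

lemma sum_mulVec' {k : ℕ} {ι : Type*} (s : Finset ι) (f : ι → Matrix (Fin k) (Fin k) ℝ)
    (v : Fin k → ℝ) : (∑ i ∈ s, f i).mulVec v = ∑ i ∈ s, (f i).mulVec v := by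
  ext j
  simp [Matrix.mulVec, dotProduct, Matrix.sum_apply, Finset.sum_mul, Finset.sum_apply]
  rw [Finset.sum_comm]

lemma vecMulVec_mulVec' {k : ℕ} (u w v : Fin k → ℝ) :
    (Matrix.vecMulVec u w).mulVec v = (w ⬝ᵥ v) • u := by
  ext j
  simp only [Matrix.mulVec, Matrix.vecMulVec_apply, dotProduct, Pi.smul_apply, smul_eq_mul,
    Finset.mul_sum]
  rw [Finset.sum_mul]
  apply Finset.sum_congr rfl; intros; ring

lemma inv_mulVec_le {k : ℕ} {A : Matrix (Fin k) (Fin k) ℝ} (hA : A.IsHermitian)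
    (hpos : A.PosDef) {β : ℝ} (hβ : 0 < β) (heig : ∀ l, β ≤ hA.eigenvalues l)
    (w : Fin k → ℝ) : vecNorm (A⁻¹.mulVec w) ≤ (1 / β) * vecNorm w := by
  have hdet : IsUnit A.det := by
    have := hpos.det_pos
    exact isUnit_iff_ne_zero.mpr (ne_of_gt this)
  have hinv : A * A⁻¹ = 1 := Matrix.mul_nonsing_inv A hdet
  have hw : A.mulVec (A⁻¹.mulVec w) = w := by
    rw [Matrix.mulVec_mulVec, hinv, Matrix.one_mulVec]
  have hb := (herm_mulVec_bounds hA (b := β + ∑ l, |hA.eigenvalues l - β|) (le_of_lt hβ)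
    (fun l => ⟨heig l, by
      have h1 : |hA.eigenvalues l - β| ≤ ∑ m, |hA.eigenvalues m - β| :=
        Finset.single_le_sum (f := fun m => |hA.eigenvalues m - β|)
          (fun _ _ => abs_nonneg _) (Finset.mem_univ l)
      have h2 : hA.eigenvalues l - β ≤ |hA.eigenvalues l - β| := le_abs_self _
      linarith⟩) (A⁻¹.mulVec w)).1
  rw [hw] at hb
  rw [div_mul_eq_mul_div, le_div_iff₀ hβ, one_mul, mul_comm]
  exact hb

lemma specNorm_mulVec_le {m k : ℕ} (A : Matrix (Fin m) (Fin k) ℝ) {σ : ℝ}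
    (h : specNorm A ≤ σ) (v : Fin k → ℝ) :
    vecNorm (A.mulVec v) ≤ σ * vecNorm v := by
  by_cases hv : vecNorm v = 0
  · have hv0 : v = 0 := by
      have : ∑ i, v i ^ 2 = 0 := by
        have h2 := Real.sqrt_eq_zero'.mp hv
        have hnn : 0 ≤ ∑ i, v i ^ 2 := by positivity
        linarith
      funext i
      have := (Finset.sum_eq_zero_iff_of_nonneg (fun i _ => sq_nonneg (v i))).mp this i
        (Finset.mem_univ i)
      exact pow_eq_zero_iff (n := 2) (by norm_num) |>.mp this
    have h0 : vecNorm (0 : Fin k → ℝ) = 0 := by simp [vecNorm]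
    have h0m : vecNorm (0 : Fin m → ℝ) = 0 := by simp [vecNorm]
    rw [hv0, Matrix.mulVec_zero, h0m, h0]
    simp
  · have hvpos : 0 < vecNorm v := lt_of_le_of_ne (vecNorm_nonneg v) (Ne.symm hv)
    set u : Fin k → ℝ := (vecNorm v)⁻¹ • v with hu
    have hun : vecNorm u = 1 := by
      rw [hu, vecNorm_smul, abs_of_pos (inv_pos.mpr hvpos), inv_mul_cancel₀ hv]
    have hbdd : BddAbove {c : ℝ | ∃ x : Fin k → ℝ, vecNorm x = 1 ∧ c = vecNorm (A.mulVec x)} := by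
      refine ⟨Real.sqrt (∑ i, ∑ j, A i j ^ 2), ?_⟩
      rintro c ⟨y, hy, rfl⟩
      rw [vecNorm]
      apply Real.sqrt_le_sqrt
      apply Finset.sum_le_sum
      intro i _
      calc (A.mulVec y) i ^ 2 = (∑ j, A i j * y j) ^ 2 := by rfl
        _ ≤ (∑ j, A i j ^ 2) * (∑ j, y j ^ 2) := Finset.sum_mul_sq_le_sq_mul_sq _ _ _
        _ = ∑ j, A i j ^ 2 := by
            have : ∑ j, y j ^ 2 = 1 := by
              have hy' := hy
              simp only [vecNorm] at hy'
              have hnn : 0 ≤ ∑ j, y j ^ 2 := by positivity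
              nlinarith [Real.sq_sqrt hnn]
            rw [this, mul_one]
    have hmem : vecNorm (A.mulVec u) ∈
        {c : ℝ | ∃ x : Fin k → ℝ, vecNorm x = 1 ∧ c = vecNorm (A.mulVec x)} :=
      ⟨u, hun, rfl⟩
    have hle : vecNorm (A.mulVec u) ≤ σ := le_trans (le_csSup hbdd hmem) h
    have hAu : A.mulVec v = vecNorm v • A.mulVec u := by
      rw [hu, Matrix.mulVec_smul]
      rw [smul_smul, mul_inv_cancel₀ hv, one_smul]
    rw [hAu, vecNorm_smul, abs_of_pos hvpos]
    calc vecNorm v * vecNorm (A.mulVec u) ≤ vecNorm v * σ :=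
          mul_le_mul_of_nonneg_left hle (le_of_lt hvpos)
      _ = σ * vecNorm v := mul_comm _ _

theorem stmt_5 {n k d : ℕ} (hn : 0 < n) (hk : 0 < k) (hd : 0 < d)
    (μ₀ β σ₁ : ℝ) (hμ : 1 ≤ μ₀) (hβ : β ∈ Set.Ioo (0 : ℝ) 1) (hσ₁ : 0 < σ₁)
    (Ω : Finset (Fin n × Fin n)) (hΩ : ∀ j : Fin n, (Sj Ω j).card = d)
    (U Ustar : Matrix (Fin n) (Fin k) ℝ)
    (hU : Uᵀ * U = 1) (hUstar : Ustarᵀ * Ustar = 1)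
    (hrows : ∀ i, vecNorm (U i) ≤ Real.sqrt (5 * μ₀ * k / n))
    (Vstar : Matrix (Fin n) (Fin k) ℝ)
    (hVrows : ∀ j, vecNorm (Vstar j) ≤ Real.sqrt (μ₀ * k / n))
    (Sig : Matrix (Fin k) (Fin k) ℝ) (hSig : specNorm Sig ≤ σ₁)
    (Bhat : Fin n → Matrix (Fin k) (Fin k) ℝ)
    (hBherm : ∀ j, (Bhat j).IsHermitian)
    (hBpos : ∀ j, (Bhat j).PosDef)
    (heig : ∀ j l, (hBherm j).eigenvalues l ∈ Set.Icc β (2 - β))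
    (x : Fin n → Fin k → ℝ) (hx : ∑ j, vecNorm (x j) ^ 2 = 1)
    (S : Finset (Fin n)) :
    ∑ j ∈ S, x j ⬝ᵥ
        (((Bhat j)⁻¹ *
            (Bhat j - ((n : ℝ) / d) • ∑ i ∈ Sj Ω j, vecMulVec (U i) (U i)) *
            (Uᵀ * Ustar) * Sig).mulVec (Vstar j))
      ≤ (2 - β + 5 * μ₀ * k) * (σ₁ / β) * Real.sqrt (μ₀ * k) *
          Real.sqrt ((S.card : ℝ) / n) := by
  obtain ⟨hβ0, hβ1⟩ := hβ
  have hn0 : (0:ℝ) < n := by exact_mod_cast hn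
  have hd0 : (0:ℝ) < d := by exact_mod_cast hd
  have hk0 : (0:ℝ) ≤ k := by positivity
  have hμk : (0:ℝ) ≤ μ₀ * k := by positivity
  have hc2 : (0:ℝ) < 2 - β + 5 * μ₀ * k := by nlinarith
  set c : ℝ := (2 - β + 5 * μ₀ * k) * (σ₁ / β) * Real.sqrt (μ₀ * k / n) with hc
  have hcnn : 0 ≤ c := by positivity
  -- per-term bound
  have hterm : ∀ j : Fin n, x j ⬝ᵥ
      (((Bhat j)⁻¹ *
          (Bhat j - ((n : ℝ) / d) • ∑ i ∈ Sj Ω j, vecMulVec (U i) (U i)) *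
          (Uᵀ * Ustar) * Sig).mulVec (Vstar j)) ≤ vecNorm (x j) * c := by
    intro j
    set B : Matrix (Fin k) (Fin k) ℝ :=
      ((n : ℝ) / d) • ∑ i ∈ Sj Ω j, vecMulVec (U i) (U i) with hBdef
    set P : Matrix (Fin k) (Fin k) ℝ := Bhat j with hPdef
    -- bound on B
    have hBbound : ∀ w : Fin k → ℝ, vecNorm (B.mulVec w) ≤ (5 * μ₀ * k) * vecNorm w := by
      intro w
      have h5 : (0:ℝ) ≤ 5 * μ₀ * k / n := by positivity
      have hrow2 : ∀ i, vecNorm (U i) ^ 2 ≤ 5 * μ₀ * k / n := by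
        intro i
        have := hrows i
        nlinarith [vecNorm_nonneg (U i), Real.sq_sqrt h5, Real.sqrt_nonneg (5 * μ₀ * k / n)]
      have hBw : B.mulVec w = ((n : ℝ) / d) • ∑ i ∈ Sj Ω j, ((U i ⬝ᵥ w) • U i) := by
        rw [hBdef, Matrix.smul_mulVec, sum_mulVec']
        congr 1
        apply Finset.sum_congr rfl
        intro i _
        exact vecMulVec_mulVec' (U i) (U i) w
      rw [hBw, vecNorm_smul, abs_of_nonneg (by positivity)]
      have hsum : vecNorm (∑ i ∈ Sj Ω j, ((U i ⬝ᵥ w) • U i))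
          ≤ ∑ i ∈ Sj Ω j, (5 * μ₀ * k / n) * vecNorm w := by
        refine (vecNorm_sum_le _ _).trans (Finset.sum_le_sum ?_)
        intro i _
        rw [vecNorm_smul]
        have habs : |U i ⬝ᵥ w| ≤ vecNorm (U i) * vecNorm w := by
          rcases abs_cases (U i ⬝ᵥ w) with ⟨h1, _⟩ | ⟨h1, _⟩
          · rw [h1]; exact dotProduct_le _ _
          · rw [h1]
            have : (-(U i)) ⬝ᵥ w ≤ vecNorm (-(U i)) * vecNorm w := dotProduct_le _ _
            have hneg : vecNorm (-(U i)) = vecNorm (U i) := by simp [vecNorm]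
            rw [hneg] at this
            simpa [neg_dotProduct] using this
        calc |U i ⬝ᵥ w| * vecNorm (U i)
            ≤ (vecNorm (U i) * vecNorm w) * vecNorm (U i) := by
              apply mul_le_mul_of_nonneg_right habs (vecNorm_nonneg _)
          _ = vecNorm (U i) ^ 2 * vecNorm w := by ring
          _ ≤ (5 * μ₀ * k / n) * vecNorm w := by
              apply mul_le_mul_of_nonneg_right (hrow2 i) (vecNorm_nonneg _)
      rw [Finset.sum_const, hΩ j, nsmul_eq_mul] at hsum
      calc (n : ℝ) / d * vecNorm (∑ i ∈ Sj Ω j, ((U i ⬝ᵥ w) • U i))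
          ≤ (n : ℝ) / d * ((d : ℝ) * ((5 * μ₀ * k / n) * vecNorm w)) := by
            apply mul_le_mul_of_nonneg_left hsum (by positivity)
        _ = (5 * μ₀ * k) * vecNorm w := by field_simp
    -- rewrite product mulVec as composition
    have hM : (P⁻¹ * (P - B) * (Uᵀ * Ustar) * Sig).mulVec (Vstar j)
        = P⁻¹.mulVec ((P - B).mulVec ((Uᵀ * Ustar).mulVec (Sig.mulVec (Vstar j)))) := by
      rw [Matrix.mulVec_mulVec, Matrix.mulVec_mulVec, Matrix.mulVec_mulVec]
    set w3 := Sig.mulVec (Vstar j) with hw3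
    set w2 := (Uᵀ * Ustar).mulVec w3 with hw2
    set w1 := (P - B).mulVec w2 with hw1
    have hb3 : vecNorm w3 ≤ σ₁ * Real.sqrt (μ₀ * k / n) := by
      calc vecNorm w3 ≤ σ₁ * vecNorm (Vstar j) := specNorm_mulVec_le Sig hSig _
        _ ≤ σ₁ * Real.sqrt (μ₀ * k / n) :=
            mul_le_mul_of_nonneg_left (hVrows j) (le_of_lt hσ₁)
    have hb2 : vecNorm w2 ≤ vecNorm w3 := by
      rw [hw2, ← Matrix.mulVec_mulVec]
      calc vecNorm (Uᵀ.mulVec (Ustar.mulVec w3)) ≤ vecNorm (Ustar.mulVec w3) :=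
            vecNorm_mulVec_transpose_le hU _
        _ = vecNorm w3 := vecNorm_mulVec_isometry hUstar _
    have hbP : vecNorm (P.mulVec w2) ≤ (2 - β) * vecNorm w2 :=
      (herm_mulVec_bounds (hBherm j) (le_of_lt hβ0)
        (fun l => ⟨(heig j l).1, (heig j l).2⟩) w2).2
    have hb1 : vecNorm w1 ≤ (2 - β + 5 * μ₀ * k) * vecNorm w2 := by
      rw [hw1, Matrix.sub_mulVec]
      calc vecNorm (P.mulVec w2 - B.mulVec w2)
          ≤ vecNorm (P.mulVec w2) + vecNorm (B.mulVec w2) := vecNorm_sub_le _ _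
        _ ≤ (2 - β) * vecNorm w2 + (5 * μ₀ * k) * vecNorm w2 :=
            add_le_add hbP (hBbound w2)
        _ = (2 - β + 5 * μ₀ * k) * vecNorm w2 := by ring
    have hb0 : vecNorm (P⁻¹.mulVec w1) ≤ (1 / β) * vecNorm w1 :=
      inv_mulVec_le (hBherm j) (hBpos j) hβ0 (fun l => (heig j l).1) w1
    have hfinal : vecNorm (P⁻¹.mulVec w1) ≤ c := by
      calc vecNorm (P⁻¹.mulVec w1) ≤ (1 / β) * vecNorm w1 := hb0
        _ ≤ (1 / β) * ((2 - β + 5 * μ₀ * k) * vecNorm w2) :=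
            mul_le_mul_of_nonneg_left hb1 (by positivity)
        _ ≤ (1 / β) * ((2 - β + 5 * μ₀ * k) * (σ₁ * Real.sqrt (μ₀ * k / n))) := by
            apply mul_le_mul_of_nonneg_left _ (by positivity)
            exact mul_le_mul_of_nonneg_left (hb2.trans hb3) (le_of_lt hc2)
        _ = c := by rw [hc]; field_simp
    calc x j ⬝ᵥ (P⁻¹ * (P - B) * (Uᵀ * Ustar) * Sig).mulVec (Vstar j)
        ≤ vecNorm (x j) * vecNorm ((P⁻¹ * (P - B) * (Uᵀ * Ustar) * Sig).mulVec (Vstar j)) :=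
          dotProduct_le _ _
      _ = vecNorm (x j) * vecNorm (P⁻¹.mulVec w1) := by rw [hM, hw1, hw2, hw3]
      _ ≤ vecNorm (x j) * c :=
          mul_le_mul_of_nonneg_left hfinal (vecNorm_nonneg _)
  -- sum up
  have hsumx : ∑ j ∈ S, vecNorm (x j) ≤ Real.sqrt S.card := by
    have h1 : (∑ j ∈ S, vecNorm (x j)) ^ 2 ≤ (S.card : ℝ) * ∑ j ∈ S, vecNorm (x j) ^ 2 := by
      have := Finset.sum_mul_sq_le_sq_mul_sq S (fun _ => (1:ℝ)) (fun j => vecNorm (x j))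
      simpa using this
    have h2 : ∑ j ∈ S, vecNorm (x j) ^ 2 ≤ 1 := by
      rw [← hx]
      exact Finset.sum_le_sum_of_subset_of_nonneg (Finset.subset_univ S)
        (fun i _ _ => sq_nonneg _)
    have h3 : (∑ j ∈ S, vecNorm (x j)) ^ 2 ≤ (S.card : ℝ) := by
      calc (∑ j ∈ S, vecNorm (x j)) ^ 2 ≤ (S.card : ℝ) * ∑ j ∈ S, vecNorm (x j) ^ 2 := h1
        _ ≤ (S.card : ℝ) * 1 := mul_le_mul_of_nonneg_left h2 (by positivity)
        _ = (S.card : ℝ) := mul_one _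
    have h4 : 0 ≤ ∑ j ∈ S, vecNorm (x j) :=
      Finset.sum_nonneg fun j _ => vecNorm_nonneg _
    exact (Real.le_sqrt h4 (by positivity)).mpr h3
  calc ∑ j ∈ S, x j ⬝ᵥ
        (((Bhat j)⁻¹ *
            (Bhat j - ((n : ℝ) / d) • ∑ i ∈ Sj Ω j, vecMulVec (U i) (U i)) *
            (Uᵀ * Ustar) * Sig).mulVec (Vstar j))
      ≤ ∑ j ∈ S, vecNorm (x j) * c := Finset.sum_le_sum fun j _ => hterm j
    _ = (∑ j ∈ S, vecNorm (x j)) * c := by rw [Finset.sum_mul]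
    _ ≤ Real.sqrt S.card * c := mul_le_mul_of_nonneg_right hsumx hcnn
    _ = (2 - β + 5 * μ₀ * k) * (σ₁ / β) * Real.sqrt (μ₀ * k) *
          Real.sqrt ((S.card : ℝ) / n) := by
        have hsqrt : Real.sqrt (μ₀ * k / n) * Real.sqrt ((S.card : ℝ))
            = Real.sqrt (μ₀ * k) * Real.sqrt ((S.card : ℝ) / n) := by
          rw [← Real.sqrt_mul (by positivity), ← Real.sqrt_mul hμk]
          congr 1
          ring
        rw [hc]
        linear_combination (2 - β + 5 * μ₀ * (k:ℝ)) * (σ₁ / β) * hsqrt
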